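/- Let r : ℂ × ℂ → A⊗A satisfy the associative Yang–Baxter equation r^{12}(−u',v)·r^{13}(u+u',v+v') − r^{23}(u+u',v')·r^{12}(u,v) + r^{13}(u,v+v')·r^{23}(u',v') = 0 and the unitarity condition r^{21}(−u,−v) = −r(u,v) for all u, u', v, v' ∈ ℂ. Suppose there is a scalar function λ : ℂ × ℂ → ℂ with λ(−u,v) = λ(u,v) such that r(u,v)·r(−u,v) = λ(u,v)·(1⊗1) for all u, v. Then for every fixed u ∈ ℂ, the function v ↦ r(u,v) satisfies the quantum Yang–Baxter equation with spectral parameter: r^{12}(u,v)·r^{13}(u,v+v')·r^{23}(u,v') = r^{23}(u,v')·r^{13}(u,v+v')·r^{12}(u,v) for all v, v' ∈ ℂ. -/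

import Mathlib

open scoped TensorProduct
set_option maxHeartbeats 1000000
set_option synthInstance.maxHeartbeats 400000
noncomputable section

/-- The algebra of `S × S` complex matrices. -/
abbrev Mat (S : Type) := Matrix S S ℂ
/-- `A ⊗ A`. -/
abbrev TT (S : Type) := Mat S ⊗[ℂ] Mat S
/-- `A ⊗ A ⊗ A`. -/
abbrev TTT (S : Type) := Mat S ⊗[ℂ] (Mat S ⊗[ℂ] Mat S)

variable (S : Type) [Fintype S] [DecidableEq S]

/-- Matrix units `e_{ij}`. -/
def E (i j : S) : Mat S := Matrix.single i j 1

/-- `x^{12}`: `a ⊗ b ↦ a ⊗ b ⊗ 1`. -/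
def leg12 : TT S →ₐ[ℂ] TTT S :=
  Algebra.TensorProduct.map (AlgHom.id ℂ (Mat S))
    (Algebra.TensorProduct.includeLeft (R := ℂ) (A := Mat S) (B := Mat S))

/-- `x^{13}`: `a ⊗ b ↦ a ⊗ 1 ⊗ b`. -/
def leg13 : TT S →ₐ[ℂ] TTT S :=
  Algebra.TensorProduct.map (AlgHom.id ℂ (Mat S))
    (Algebra.TensorProduct.includeRight (R := ℂ) (A := Mat S) (B := Mat S))

/-- `x^{23}`: `a ⊗ b ↦ 1 ⊗ a ⊗ b`. -/
def leg23 : TT S →ₐ[ℂ] TTT S :=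
  Algebra.TensorProduct.includeRight (R := ℂ) (A := Mat S) (B := TT S)

/-- `x^{21}`: `a ⊗ b ↦ b ⊗ a`. -/
def flip21 : TT S →ₐ[ℂ] TT S :=
  (Algebra.TensorProduct.comm ℂ (Mat S) (Mat S)).toAlgHom


def sigma12 : TTT S →ₐ[ℂ] TTT S :=
  ((Algebra.TensorProduct.assoc ℂ ℂ ℂ (Mat S) (Mat S) (Mat S)).toAlgHom.comp
    ((Algebra.TensorProduct.map
        (Algebra.TensorProduct.comm ℂ (Mat S) (Mat S)).toAlgHom
        (AlgHom.id ℂ (Mat S))).comp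
      (Algebra.TensorProduct.assoc ℂ ℂ ℂ (Mat S) (Mat S) (Mat S)).symm.toAlgHom))

lemma sigma12_leg12 (x : TT S) : sigma12 S (leg12 S x) = leg12 S (flip21 S x) := by
  induction x using TensorProduct.induction_on with
  | zero => simp
  | tmul a b =>
      simp [sigma12, leg12, flip21, Algebra.TensorProduct.assoc_tmul,
        Algebra.TensorProduct.assoc_symm_tmul, Algebra.TensorProduct.comm_tmul]
  | add x y hx hy => simp [map_add, hx, hy]

lemma sigma12_leg13 (x : TT S) : sigma12 S (leg13 S x) = leg23 S x := by
  induction x using TensorProduct.induction_on with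
  | zero => simp
  | tmul a b =>
      simp [sigma12, leg13, leg23, Algebra.TensorProduct.assoc_tmul,
        Algebra.TensorProduct.assoc_symm_tmul, Algebra.TensorProduct.comm_tmul]
  | add x y hx hy => simp [map_add, hx, hy]

lemma sigma12_leg23 (x : TT S) : sigma12 S (leg23 S x) = leg13 S x := by
  induction x using TensorProduct.induction_on with
  | zero => simp
  | tmul a b =>
      simp [sigma12, leg13, leg23, Algebra.TensorProduct.assoc_tmul,
        Algebra.TensorProduct.assoc_symm_tmul, Algebra.TensorProduct.comm_tmul]
  | add x y hx hy => simp [map_add, hx, hy]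


/-- Abstract ring-theoretic core of the argument. -/
lemma qybe_core {R : Type*} [Ring R] [Algebra ℂ R]
    (A12 A13 A23 B12 C13 C23 : R) (c : ℂ)
    (E1 : B12 * C13 - C23 * A12 + A13 * A23 = 0)
    (E2 : -A12 * C23 - C13 * (-B12) + A23 * A13 = 0)
    (H1 : A12 * B12 = c • (1 : R)) (H2 : B12 * A12 = c • (1 : R)) :
    A12 * A13 * A23 = A23 * A13 * A12 := by
  have K1 : c • C13 - A12 * C23 * A12 + A12 * A13 * A23 = 0 := by
    have h : A12 * (B12 * C13 - C23 * A12 + A13 * A23) = 0 := by rw [E1, mul_zero]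
    calc c • C13 - A12 * C23 * A12 + A12 * A13 * A23
        = A12 * (B12 * C13 - C23 * A12 + A13 * A23) := by
          rw [mul_add, mul_sub, ← mul_assoc, ← mul_assoc, ← mul_assoc, H1,
            smul_mul_assoc, one_mul]
      _ = 0 := h
  have K2 : -(A12 * C23 * A12) + c • C13 + A23 * A13 * A12 = 0 := by
    have h : (-A12 * C23 - C13 * (-B12) + A23 * A13) * A12 = 0 := by rw [E2, zero_mul]
    calc -(A12 * C23 * A12) + c • C13 + A23 * A13 * A12
        = (-A12 * C23 - C13 * (-B12) + A23 * A13) * A12 := by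
          rw [add_mul, sub_mul, neg_mul, neg_mul, mul_neg, neg_mul, sub_neg_eq_add,
            mul_assoc C13 B12 A12, H2, mul_smul_comm, mul_one]
      _ = 0 := h
  have h1 : A12 * A13 * A23 = A12 * C23 * A12 - c • C13 := by
    have := eq_neg_of_add_eq_zero_right K1
    rw [this]; abel
  have h2 : A23 * A13 * A12 = A12 * C23 * A12 - c • C13 := by
    have := eq_neg_of_add_eq_zero_right K2
    rw [this]; abel
  rw [h1, h2]


/-- a unitary solution of the AYBE such that `r(u,v)·r(−u,v)` is a scalar
multiple of `1 ⊗ 1` (with an even scalar function) satisfies, for each fixed `u`, the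
quantum Yang–Baxter equation with spectral parameter. -/
theorem stmt7 (N : ℕ)
    (r : ℂ → ℂ → TT (Fin N))
    (hAYBE : ∀ u u' v v' : ℂ,
      leg12 (Fin N) (r (-u') v) * leg13 (Fin N) (r (u + u') (v + v'))
        - leg23 (Fin N) (r (u + u') v') * leg12 (Fin N) (r u v)
        + leg13 (Fin N) (r u (v + v')) * leg23 (Fin N) (r u' v') = 0)
    (hunit : ∀ u v : ℂ, flip21 (Fin N) (r (-u) (-v)) = - r u v)
    (lam : ℂ → ℂ → ℂ)
    (hlam : ∀ u v : ℂ, lam (-u) v = lam u v)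
    (hscal : ∀ u v : ℂ, r u v * r (-u) v = lam u v • (1 : TT (Fin N))) :
    ∀ u v v' : ℂ,
      leg12 (Fin N) (r u v) * leg13 (Fin N) (r u (v + v')) * leg23 (Fin N) (r u v')
        = leg23 (Fin N) (r u v') * leg13 (Fin N) (r u (v + v')) * leg12 (Fin N) (r u v) := by
  intro u v v'
  -- E2 : the sigma12-transformed AYBE instance
  have E2 : -(leg12 (Fin N) (r u v)) * leg23 (Fin N) (r (u + u) v')
      - leg13 (Fin N) (r (u + u) (v + v')) * -(leg12 (Fin N) (r (-u) v))
      + leg23 (Fin N) (r u v') * leg13 (Fin N) (r u (v + v')) = 0 := by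
    have h := congrArg (sigma12 (Fin N)) (hAYBE u u (-v) (v + v'))
    have hv : -v + (v + v') = v' := by ring
    rw [hv] at h
    simp only [map_add, map_sub, map_mul, map_zero, sigma12_leg12, sigma12_leg13,
      sigma12_leg23] at h
    have h1 : flip21 (Fin N) (r (-u) (-v)) = - r u v := hunit u v
    have h2 : flip21 (Fin N) (r u (-v)) = - r (-u) v := by
      have := hunit (-u) v
      rwa [neg_neg] at this
    rw [h1, h2] at h
    simpa only [map_neg] using h
  have H1 : leg12 (Fin N) (r u v) * leg12 (Fin N) (r (-u) v)
      = lam u v • (1 : TTT (Fin N)) := by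
    rw [← map_mul, hscal u v, map_smul]; exact congrArg _ (leg12 (Fin N)).map_one'
  have H2 : leg12 (Fin N) (r (-u) v) * leg12 (Fin N) (r u v)
      = lam u v • (1 : TTT (Fin N)) := by
    have h := hscal (-u) v
    rw [neg_neg, hlam] at h
    rw [← map_mul, h, map_smul]; exact congrArg _ (leg12 (Fin N)).map_one'
  exact qybe_core (leg12 (Fin N) (r u v)) (leg13 (Fin N) (r u (v + v')))
    (leg23 (Fin N) (r u v')) (leg12 (Fin N) (r (-u) v))
    (leg13 (Fin N) (r (u + u) (v + v'))) (leg23 (Fin N) (r (u + u) v'))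
    (lam u v) (hAYBE u u v v') E2 H1 H2
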